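/- The baxterized R-operators between ℂ² and the Verma module V_α satisfy the unitarity relation: for all u ∈ ℂ, R_{ℂ²,V_α}(u) · R_{V_α,ℂ²}(−u) = sinh(hα/2 + u) sinh(hα/2 − u) · Id as operators on V_α⊗ℂ² (equivalently, as a product of 2×2 matrices with entries in End(V_α)). -/

import Mathlib

noncomputable section

/-- The Verma module `V_α`: finitely supported complex sequences, basis `|n⟩`. -/
abbrev Verma : Type := ℕ →₀ ℂ

/-- The basis vector `|n⟩`. -/
noncomputable def ket (n : ℕ) : Verma := Finsupp.single n 1

/-- The linear operator on `Verma` determined by its values on the basis vectors. -/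
noncomputable def ladderOp (t : ℕ → Verma) : Module.End ℂ Verma :=
  Finsupp.lsum ℂ fun n => LinearMap.toSpanSingleton ℂ Verma (t n)

/-- The q-deformed number `[x]_q` with `q = e^h`. -/
noncomputable def qnum (h x : ℂ) : ℂ :=
  (Complex.exp (h * x) - Complex.exp (-(h * x))) / (Complex.exp h - Complex.exp (-h))

/-- `E |n⟩ = [n]_q [α−n]_q |n−1⟩`, `E |0⟩ = 0`. -/
noncomputable def Eop (h α : ℂ) : Module.End ℂ Verma :=
  ladderOp fun n => if n = 0 then 0 else (qnum h n * qnum h (α - n)) • ket (n - 1)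

/-- `F |n⟩ = |n+1⟩`. -/
noncomputable def Fop : Module.End ℂ Verma := ladderOp fun n => ket (n + 1)

/-- `K |n⟩ = q^{α−1−2n} |n⟩`. -/
noncomputable def Kop (h α : ℂ) : Module.End ℂ Verma :=
  ladderOp fun n => Complex.exp (h * (α - 1 - 2 * n)) • ket n

/-- `K⁻¹ |n⟩ = q^{−(α−1−2n)} |n⟩`. -/
noncomputable def Kinv (h α : ℂ) : Module.End ℂ Verma :=
  ladderOp fun n => Complex.exp (-(h * (α - 1 - 2 * n))) • ket n

/-- Operators on `V_α ⊗ ℂ²` as 2×2 matrices with entries in `End(V_α)`. -/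
abbrev Op2 : Type := Matrix (Fin 2) (Fin 2) (Module.End ℂ Verma)

/-- The diagonal operator `e^{x + cH} : |n⟩ ↦ e^{x + c(α−1−2n)} |n⟩`. -/
noncomputable def expD (α x c : ℂ) : Module.End ℂ Verma :=
  ladderOp fun n => Complex.exp (x + c * (α - 1 - 2 * n)) • ket n

/-- The diagonal operator `sinh(x + cH) : |n⟩ ↦ sinh(x + c(α−1−2n)) |n⟩`. -/
noncomputable def sinhD (α x c : ℂ) : Module.End ℂ Verma :=
  ladderOp fun n => Complex.sinh (x + c * (α - 1 - 2 * n)) • ket n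

/-- The baxterized R-operator `R_{ℂ²,V_α}(u)`, a 2×2 matrix over `End(V_α)` with rows
`(sinh(u+h/2+(h/2)H), sinh(h) e^{u+h/2+(h/2)H} F)` and
`(sinh(h) E e^{−u−h/2−(h/2)H}, sinh(u+h/2−(h/2)H))`. -/
noncomputable def RcV (h α u : ℂ) : Op2 :=
  !![sinhD α (u + h / 2) (h / 2),
      Complex.sinh h • (expD α (u + h / 2) (h / 2) * Fop);
      Complex.sinh h • (Eop h α * expD α (-u - h / 2) (-(h / 2))),
      sinhD α (u + h / 2) (-(h / 2))]

/-- The baxterized R-operator `R_{V_α,ℂ²}(u)`, a 2×2 matrix over `End(V_α)` with rows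
`(sinh(u+h/2+(h/2)H), sinh(h) F e^{−u−h/2+(h/2)H})` and
`(sinh(h) e^{u+h/2−(h/2)H} E, sinh(u+h/2−(h/2)H))`. -/
noncomputable def RVc (h α u : ℂ) : Op2 :=
  !![sinhD α (u + h / 2) (h / 2),
      Complex.sinh h • (Fop * expD α (-u - h / 2) (h / 2));
      Complex.sinh h • (expD α (u + h / 2) (-(h / 2)) * Eop h α),
      sinhD α (u + h / 2) (-(h / 2))]

lemma ladderOp_ket (t : ℕ → Verma) (n : ℕ) : ladderOp t (ket n) = t n := by
  simp [ladderOp, ket]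

lemma end_ext {f g : Module.End ℂ Verma} (H : ∀ n, f (ket n) = g (ket n)) : f = g := by
  refine Finsupp.lhom_ext' fun n => LinearMap.ext_ring ?_
  simpa [ket] using H n

lemma expD_ket (α x c : ℂ) (n : ℕ) :
    expD α x c (ket n) = Complex.exp (x + c * (α - 1 - 2 * n)) • ket n := ladderOp_ket ..
lemma sinhD_ket (α x c : ℂ) (n : ℕ) :
    sinhD α x c (ket n) = Complex.sinh (x + c * (α - 1 - 2 * n)) • ket n := ladderOp_ket ..
lemma Fop_ket (n : ℕ) : Fop (ket n) = ket (n + 1) := ladderOp_ket ..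
lemma Eop_ket_zero (h α : ℂ) : Eop h α (ket 0) = 0 := by
  simpa [Eop] using ladderOp_ket (fun n => if n = 0 then 0 else (qnum h n * qnum h (α - n)) • ket (n - 1)) 0
lemma Eop_ket_succ (h α : ℂ) (n : ℕ) :
    Eop h α (ket (n + 1)) = (qnum h (n + 1) * qnum h (α - (n + 1))) • ket n := by
  simpa [Eop] using ladderOp_ket (fun n => if n = 0 then 0 else (qnum h n * qnum h (α - n)) • ket (n - 1)) (n+1)

lemma sinh_h_denom (h : ℂ) (hq : Complex.exp h ^ 2 ≠ 1) :
    Complex.exp h - (Complex.exp h)⁻¹ ≠ 0 := by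
  intro hh
  apply hq
  have h0 := Complex.exp_ne_zero h
  field_simp at hh
  rw [sq]
  linear_combination hh

lemma sinh_h_ne_zero (h : ℂ) (hq : Complex.exp h ^ 2 ≠ 1) : Complex.sinh h ≠ 0 := by
  intro hh
  apply sinh_h_denom h hq
  simp only [Complex.sinh, Complex.exp_neg, div_eq_zero_iff] at hh
  rcases hh with hh | hh
  · exact hh
  · norm_num at hh

lemma sinh_mul_qnum (h y : ℂ) (hq : Complex.exp h ^ 2 ≠ 1) :
    Complex.sinh h * qnum h y = Complex.sinh (h * y) := by
  have hd := sinh_h_denom h hq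
  have h0 := Complex.exp_ne_zero h
  have hs := sinh_h_ne_zero h hq
  rw [qnum, show Complex.exp (h*y) - Complex.exp (-(h*y)) = 2 * Complex.sinh (h*y) by
        simp only [Complex.sinh]; ring,
      show Complex.exp h - Complex.exp (-h) = 2 * Complex.sinh h by
        simp only [Complex.sinh]; ring]
  field_simp

lemma sinh_mul_sinh (x y : ℂ) :
    Complex.sinh x * Complex.sinh y = (Complex.cosh (x + y) - Complex.cosh (x - y)) / 2 := by
  rw [Complex.cosh_add, Complex.cosh_sub]
  ring

lemma key0 (h α u : ℂ) :
    Complex.sinh (-u + h / 2 + h / 2 * (α - 1 - 2 * 0)) *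
        Complex.sinh (u + h / 2 + h / 2 * (α - 1 - 2 * 0)) =
      Complex.sinh (h * α / 2 + u) * Complex.sinh (h * α / 2 - u) := by
  rw [show -u + h / 2 + h / 2 * (α - 1 - 2 * 0) = h * α / 2 - u by ring,
      show u + h / 2 + h / 2 * (α - 1 - 2 * 0) = h * α / 2 + u by ring]
  ring

lemma keyA (h α u x : ℂ) (hq : Complex.exp h ^ 2 ≠ 1) :
    Complex.sinh (-u + h / 2 + h / 2 * (α - 1 - 2 * (x + 1))) *
        Complex.sinh (u + h / 2 + h / 2 * (α - 1 - 2 * (x + 1))) +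
      Complex.sinh h * Complex.sinh h *
        (qnum h (x + 1) * qnum h (α - (x + 1)) * Complex.exp (-u + h / 2 + -(h / 2) * (α - 1 - 2 * x)) *
          Complex.exp (u + h / 2 + h / 2 * (α - 1 - 2 * (x + 1)))) =
    Complex.sinh (h * α / 2 + u) * Complex.sinh (h * α / 2 - u) := by
  have hgroup : Complex.sinh h * Complex.sinh h *
        (qnum h (x + 1) * qnum h (α - (x + 1)) * Complex.exp (-u + h / 2 + -(h / 2) * (α - 1 - 2 * x)) *
          Complex.exp (u + h / 2 + h / 2 * (α - 1 - 2 * (x + 1)))) =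
      (Complex.sinh h * qnum h (x + 1)) * (Complex.sinh h * qnum h (α - (x + 1))) *
        (Complex.exp (-u + h / 2 + -(h / 2) * (α - 1 - 2 * x) +
          (u + h / 2 + h / 2 * (α - 1 - 2 * (x + 1))))) := by
    conv_rhs => rw [Complex.exp_add]
    ring
  rw [hgroup, sinh_mul_qnum h _ hq, sinh_mul_qnum h _ hq,
      show -u + h / 2 + -(h / 2) * (α - 1 - 2 * x) + (u + h / 2 + h / 2 * (α - 1 - 2 * (x + 1)))
        = 0 by ring, Complex.exp_zero, mul_one]
  simp only [sinh_mul_sinh]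
  rw [show -u + h / 2 + h / 2 * (α - 1 - 2 * (x + 1)) + (u + h / 2 + h / 2 * (α - 1 - 2 * (x + 1)))
        = h * α - 2 * h * x - 2 * h by ring,
      show -u + h / 2 + h / 2 * (α - 1 - 2 * (x + 1)) - (u + h / 2 + h / 2 * (α - 1 - 2 * (x + 1)))
        = -(2 * u) by ring,
      show h * (x + 1) + h * (α - (x + 1)) = h * α by ring,
      show h * (x + 1) - h * (α - (x + 1)) = -(h * α - 2 * h * x - 2 * h) by ring,
      show h * α / 2 + u + (h * α / 2 - u) = h * α by ring,
      show h * α / 2 + u - (h * α / 2 - u) = 2 * u by ring,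
      Complex.cosh_neg, Complex.cosh_neg]
  ring

lemma keyB (h α u x : ℂ) :
    Complex.sinh h * Complex.exp (- -u - h / 2 + h / 2 * (α - 1 - 2 * x)) *
        Complex.sinh (u + h / 2 + h / 2 * (α - 1 - 2 * (x + 1))) +
      Complex.sinh (-u + h / 2 + -(h / 2) * (α - 1 - 2 * x)) *
        (Complex.sinh h * Complex.exp (u + h / 2 + h / 2 * (α - 1 - 2 * (x + 1)))) = 0 := by
  rw [show - -u - h / 2 + h / 2 * (α - 1 - 2 * x) = u + h * α / 2 - h * x - h by ring,
      show u + h / 2 + h / 2 * (α - 1 - 2 * (x + 1)) = u + h * α / 2 - h * x - h by ring,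
      show -u + h / 2 + -(h / 2) * (α - 1 - 2 * x) = -(u + h * α / 2 - h * x - h) by ring,
      Complex.sinh_neg]
  ring

lemma keyC (h α u x : ℂ) :
    Complex.sinh (-u + h / 2 + h / 2 * (α - 1 - 2 * (x + 1))) *
          (Complex.sinh h * Complex.exp (-u - h / 2 + -(h / 2) * (α - 1 - 2 * (x + 1)))) *
        (qnum h (x + 1) * qnum h (α - (x + 1))) +
      Complex.sinh h *
        (qnum h (x + 1) * qnum h (α - (x + 1)) * Complex.exp (-u + h / 2 + -(h / 2) * (α - 1 - 2 * x)) *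
          Complex.sinh (u + h / 2 + -(h / 2) * (α - 1 - 2 * x))) = 0 := by
  rw [show -u + h / 2 + h / 2 * (α - 1 - 2 * (x + 1)) = h * α / 2 - u - h * x - h by ring,
      show -u - h / 2 + -(h / 2) * (α - 1 - 2 * (x + 1)) = -u - h * α / 2 + h * x + h by ring,
      show -u + h / 2 + -(h / 2) * (α - 1 - 2 * x) = -u - h * α / 2 + h * x + h by ring,
      show u + h / 2 + -(h / 2) * (α - 1 - 2 * x) = -(h * α / 2 - u - h * x - h) by ring,
      Complex.sinh_neg]
  ring

lemma keyD (h α u x : ℂ) (hq : Complex.exp h ^ 2 ≠ 1) :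
    Complex.sinh h * Complex.exp (- -u - h / 2 + h / 2 * (α - 1 - 2 * x)) *
          (Complex.sinh h * Complex.exp (-u - h / 2 + -(h / 2) * (α - 1 - 2 * (x + 1)))) *
        (qnum h (x + 1) * qnum h (α - (x + 1))) +
      Complex.sinh (-u + h / 2 + -(h / 2) * (α - 1 - 2 * x)) *
        Complex.sinh (u + h / 2 + -(h / 2) * (α - 1 - 2 * x)) =
    Complex.sinh (h * α / 2 + u) * Complex.sinh (h * α / 2 - u) := by
  have hgroup : Complex.sinh h * Complex.exp (- -u - h / 2 + h / 2 * (α - 1 - 2 * x)) *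
          (Complex.sinh h * Complex.exp (-u - h / 2 + -(h / 2) * (α - 1 - 2 * (x + 1)))) *
        (qnum h (x + 1) * qnum h (α - (x + 1))) =
      (Complex.sinh h * qnum h (x + 1)) * (Complex.sinh h * qnum h (α - (x + 1))) *
        (Complex.exp (- -u - h / 2 + h / 2 * (α - 1 - 2 * x) +
          (-u - h / 2 + -(h / 2) * (α - 1 - 2 * (x + 1))))) := by
    conv_rhs => rw [Complex.exp_add]
    ring
  rw [hgroup, sinh_mul_qnum h _ hq, sinh_mul_qnum h _ hq,
      show - -u - h / 2 + h / 2 * (α - 1 - 2 * x) + (-u - h / 2 + -(h / 2) * (α - 1 - 2 * (x + 1)))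
        = 0 by ring, Complex.exp_zero, mul_one]
  simp only [sinh_mul_sinh]
  rw [show h * (x + 1) + h * (α - (x + 1)) = h * α by ring,
      show h * (x + 1) - h * (α - (x + 1)) = -(h * α - 2 * h * x - 2 * h) by ring,
      show -u + h / 2 + -(h / 2) * (α - 1 - 2 * x) + (u + h / 2 + -(h / 2) * (α - 1 - 2 * x))
        = -(h * α - 2 * h * x - 2 * h) by ring,
      show -u + h / 2 + -(h / 2) * (α - 1 - 2 * x) - (u + h / 2 + -(h / 2) * (α - 1 - 2 * x))
        = -(2 * u) by ring,
      show h * α / 2 + u + (h * α / 2 - u) = h * α by ring,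
      show h * α / 2 + u - (h * α / 2 - u) = 2 * u by ring,
      Complex.cosh_neg, Complex.cosh_neg]
  ring


/-- Unitarity of the baxterized R-operators between `ℂ²` and `V_α`:
`R_{ℂ²,V_α}(u) R_{V_α,ℂ²}(−u) = sinh(hα/2 + u) sinh(hα/2 − u) · Id`. -/
theorem R_unitarity (h α : ℂ) (hq : Complex.exp h ^ 2 ≠ 1) :
    ∀ u : ℂ,
      RcV h α u * RVc h α (-u)
        = (Complex.sinh (h * α / 2 + u) * Complex.sinh (h * α / 2 - u)) • (1 : Op2) := by
  intro u
  refine Matrix.ext fun i j => ?_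
  fin_cases i <;> fin_cases j <;>
    simp only [Matrix.mul_apply, Fin.sum_univ_two, RcV, RVc, Matrix.smul_apply, Fin.isValue,
      Fin.mk_zero, Fin.mk_one,
      Matrix.cons_val', Matrix.cons_val_zero, Matrix.cons_val_one, Matrix.head_cons,
      Matrix.head_fin_const, Matrix.of_apply, Matrix.empty_val', Matrix.cons_val_fin_one,
      Matrix.one_apply_eq, Matrix.one_apply_ne, ne_eq, Fin.mk_eq_mk, Matrix.one_apply,
      if_true, if_false, zero_ne_one, one_ne_zero, reduceIte] <;>
    refine end_ext fun n => ?_ <;>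
    simp only [LinearMap.add_apply, Module.End.mul_apply, LinearMap.smul_apply,
      sinhD_ket, expD_ket, Fop_ket, map_smul, smul_smul, Module.End.one_apply,
      LinearMap.zero_apply, smul_zero]
  · -- (0,0)
    rcases n with _ | m
    · simp only [Eop_ket_zero, map_zero, smul_zero, add_zero, Nat.cast_zero]
      congr 1
      exact key0 h α u
    · simp only [Eop_ket_succ, map_smul, smul_smul, sinhD_ket, expD_ket, Fop_ket]
      rw [← add_smul]
      congr 1
      push_cast
      exact keyA h α u m hq
  · -- (0,1)
    rw [← add_smul]
    refine smul_eq_zero_of_left ?_ _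
    push_cast
    exact keyB h α u n
  · -- (1,0)
    rcases n with _ | m
    · simp only [Eop_ket_zero, map_zero, smul_zero, add_zero, zero_add]
    · simp only [Eop_ket_succ, map_smul, smul_smul, sinhD_ket, expD_ket]
      rw [← add_smul]
      refine smul_eq_zero_of_left ?_ _
      push_cast
      exact keyC h α u m
  · -- (1,1)
    simp only [Eop_ket_succ, map_smul, smul_smul]
    rw [← add_smul]
    congr 1
    push_cast
    exact keyD h α u n hq
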